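/- Let d ≥ 1, n₁,…,n_{d+1} ≥ 1, and F = ℝ or ℂ. Then β((n₁,…,n_{d+1}),F) ≥ β((n₁,…,n_d),F)/√(n_{d+1}) and α((n₁,…,n_{d+1}),F) ≤ √(n_{d+1})·α((n₁,…,n_d),F). -/

import Mathlib

noncomputable section


/-- The Euclidean norm of a vector in `𝕜^k`. -/
def vnorm {𝕜 : Type*} [RCLike 𝕜] {k : ℕ} (x : Fin k → 𝕜) : ℝ :=
  Real.sqrt (∑ i, ‖x i‖ ^ 2)

/-- The rank-one tensor `x₁ ⊗ ⋯ ⊗ x_d`. -/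
def rankOne {𝕜 : Type*} [RCLike 𝕜] {d : ℕ} {n : Fin d → ℕ}
    (x : ∀ j, Fin (n j) → 𝕜) : (∀ j, Fin (n j)) → 𝕜 :=
  fun i => ∏ j, x j (i j)

/-- The standard inner product `⟨T, Y⟩ = ∑ tᵢ · conj yᵢ` of tensors. -/
def tinner {𝕜 : Type*} [RCLike 𝕜] {d : ℕ} {n : Fin d → ℕ}
    (T Y : (∀ j, Fin (n j)) → 𝕜) : 𝕜 :=
  ∑ i, T i * (starRingEnd 𝕜) (Y i)

/-- The Hilbert–Schmidt norm of a tensor. -/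
def hsNorm {𝕜 : Type*} [RCLike 𝕜] {d : ℕ} {n : Fin d → ℕ}
    (T : (∀ j, Fin (n j)) → 𝕜) : ℝ :=
  Real.sqrt (∑ i, ‖T i‖ ^ 2)

/-- The spectral norm of a tensor:
`max {|⟨T, x₁⊗⋯⊗x_d⟩| : ‖x_j‖ = 1 for all j}`. -/
def specNorm {𝕜 : Type*} [RCLike 𝕜] {d : ℕ} {n : Fin d → ℕ}
    (T : (∀ j, Fin (n j)) → 𝕜) : ℝ :=
  sSup {r : ℝ | ∃ x : ∀ j, Fin (n j) → 𝕜, (∀ j, vnorm (x j) = 1) ∧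
    r = ‖tinner T (rankOne x)‖}

/-- The nuclear norm of a tensor:
`min {∑ᵢ ∏ⱼ ‖x_{i,j}‖ : T = ∑ᵢ x_{i,1}⊗⋯⊗x_{i,d}}`. -/
def nucNorm {𝕜 : Type*} [RCLike 𝕜] {d : ℕ} {n : Fin d → ℕ}
    (T : (∀ j, Fin (n j)) → 𝕜) : ℝ :=
  sInf {r : ℝ | ∃ (m : ℕ) (x : Fin m → ∀ j, Fin (n j) → 𝕜),
    T = (∑ i, rankOne (x i)) ∧ r = ∑ i, ∏ j, vnorm (x i j)}

/-- `α(n, 𝕜)`: the maximal nuclear norm of a tensor of Hilbert–Schmidt norm one. -/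
def alphaN (𝕜 : Type*) [RCLike 𝕜] (d : ℕ) (n : Fin d → ℕ) : ℝ :=
  sSup {r : ℝ | ∃ T : (∀ j, Fin (n j)) → 𝕜, hsNorm T = 1 ∧ r = nucNorm T}

/-- `β(n, 𝕜)`: the minimal spectral norm of a tensor of Hilbert–Schmidt norm one. -/
def betaN (𝕜 : Type*) [RCLike 𝕜] (d : ℕ) (n : Fin d → ℕ) : ℝ :=
  sInf {r : ℝ | ∃ T : (∀ j, Fin (n j)) → 𝕜, hsNorm T = 1 ∧ r = specNorm T}

section Helpers

variable {𝕜 : Type*} [RCLike 𝕜]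

/-- unit basis vector -/
def euv {𝕜 : Type*} [RCLike 𝕜] {k : ℕ} (b : Fin k) : Fin k → 𝕜 :=
  fun a => if a = b then 1 else 0

lemma vnorm_single {k : ℕ} (b : Fin k) (c : 𝕜) :
    vnorm (fun a => if a = b then c else 0) = ‖c‖ := by
  unfold vnorm
  rw [show ∑ a, ‖if a = b then c else 0‖ ^ 2 = ∑ a, (if a = b then ‖c‖^2 else 0) from
    Finset.sum_congr rfl fun a _ => by split <;> simp]
  rw [Finset.sum_ite_eq' Finset.univ b fun _ => ‖c‖^2]
  simp [Real.sqrt_sq_eq_abs]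

lemma vnorm_euv {k : ℕ} (b : Fin k) : vnorm (euv (𝕜 := 𝕜) b) = 1 := by
  unfold euv; simpa using vnorm_single b (1 : 𝕜)

lemma vnorm_nonneg {k : ℕ} (x : Fin k → 𝕜) : 0 ≤ vnorm x := Real.sqrt_nonneg _

lemma vnorm_smul {k : ℕ} (c : 𝕜) (x : Fin k → 𝕜) : vnorm (c • x) = ‖c‖ * vnorm x := by
  unfold vnorm
  rw [show ∑ i, ‖(c • x) i‖ ^ 2 = ‖c‖^2 * ∑ i, ‖x i‖^2 by
    rw [Finset.mul_sum]; exact Finset.sum_congr rfl fun i _ => by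
      simp [norm_smul, mul_pow]]
  rw [Real.sqrt_mul (by positivity), Real.sqrt_sq (norm_nonneg c)]

variable {d : ℕ} {n : Fin d → ℕ}

lemma hsNorm_nonneg (T : (∀ j, Fin (n j)) → 𝕜) : 0 ≤ hsNorm T := Real.sqrt_nonneg _

lemma hsNorm_smul (c : 𝕜) (T : (∀ j, Fin (n j)) → 𝕜) :
    hsNorm (c • T) = ‖c‖ * hsNorm T := by
  unfold hsNorm
  rw [show ∑ i, ‖(c • T) i‖ ^ 2 = ‖c‖^2 * ∑ i, ‖T i‖^2 by
    rw [Finset.mul_sum]; exact Finset.sum_congr rfl fun i _ => by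
      simp [norm_smul, mul_pow]]
  rw [Real.sqrt_mul (by positivity), Real.sqrt_sq (norm_nonneg c)]

lemma sqrt_prod' {ι : Type*} (s : Finset ι) (f : ι → ℝ) (hf : ∀ i ∈ s, 0 ≤ f i) :
    Real.sqrt (∏ i ∈ s, f i) = ∏ i ∈ s, Real.sqrt (f i) := by
  induction s using Finset.cons_induction with
  | empty => simp
  | cons a s ha ih =>
    rw [Finset.prod_cons, Finset.prod_cons, Real.sqrt_mul (hf a (Finset.mem_cons_self a s)),
      ih fun i hi => hf i (Finset.mem_cons_of_mem hi)]

lemma hsNorm_eq_zero {T : (∀ j, Fin (n j)) → 𝕜} (h : hsNorm T = 0) : T = 0 := by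
  have h2 : ∑ i, ‖T i‖ ^ 2 = 0 := by
    have h1 : ∑ i, ‖T i‖ ^ 2 ≤ 0 := Real.sqrt_eq_zero'.mp h
    exact le_antisymm h1 (Finset.sum_nonneg fun i _ => by positivity)
  funext b
  have := (Finset.sum_eq_zero_iff_of_nonneg (fun i _ => by positivity)).mp h2 b (Finset.mem_univ b)
  simpa [pow_eq_zero_iff] using this

lemma tinner_norm_le (T Y : (∀ j, Fin (n j)) → 𝕜) :
    ‖tinner T Y‖ ≤ hsNorm T * hsNorm Y := by
  calc ‖tinner T Y‖ ≤ ∑ i, ‖T i‖ * ‖Y i‖ := by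
        refine (norm_sum_le _ _).trans (Finset.sum_le_sum fun i _ => ?_)
        rw [norm_mul, RCLike.norm_conj]
  _ ≤ _ := Real.sum_mul_le_sqrt_mul_sqrt _ _ _

lemma hsNorm_rankOne (x : ∀ j, Fin (n j) → 𝕜) :
    hsNorm (rankOne x) = ∏ j, vnorm (x j) := by
  unfold hsNorm rankOne vnorm
  rw [show ∑ i : ∀ j, Fin (n j), ‖∏ j, x j (i j)‖ ^ 2 = ∑ i : ∀ j, Fin (n j), ∏ j, ‖x j (i j)‖^2 by
    refine Finset.sum_congr rfl fun i _ => by rw [norm_prod, ← Finset.prod_pow]]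
  have key := Finset.prod_univ_sum (fun j : Fin d => (Finset.univ : Finset (Fin (n j))))
    (fun j a => ‖x j a‖ ^ 2)
  rw [Fintype.piFinset_univ] at key
  rw [← key]
  exact sqrt_prod' _ _ fun j _ => Finset.sum_nonneg fun a _ => by positivity



lemma specSet_bddAbove (T : (∀ j, Fin (n j)) → 𝕜) :
    BddAbove {r : ℝ | ∃ x : ∀ j, Fin (n j) → 𝕜, (∀ j, vnorm (x j) = 1) ∧
      r = ‖tinner T (rankOne x)‖} := by
  refine ⟨hsNorm T, ?_⟩
  rintro r ⟨x, hx, rfl⟩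
  calc ‖tinner T (rankOne x)‖ ≤ hsNorm T * hsNorm (rankOne x) := tinner_norm_le T _
  _ = hsNorm T := by rw [hsNorm_rankOne]; simp [hx]

lemma specSet_nonempty (hn : ∀ j, 1 ≤ n j) (T : (∀ j, Fin (n j)) → 𝕜) :
    Set.Nonempty {r : ℝ | ∃ x : ∀ j, Fin (n j) → 𝕜, (∀ j, vnorm (x j) = 1) ∧
      r = ‖tinner T (rankOne x)‖} :=
  ⟨_, fun j => euv ⟨0, hn j⟩, fun j => vnorm_euv _, rfl⟩

lemma norm_tinner_le_specNorm (T : (∀ j, Fin (n j)) → 𝕜)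
    (x : ∀ j, Fin (n j) → 𝕜) (hx : ∀ j, vnorm (x j) = 1) :
    ‖tinner T (rankOne x)‖ ≤ specNorm T :=
  le_csSup (specSet_bddAbove T) ⟨x, hx, rfl⟩

lemma specNorm_nonneg (T : (∀ j, Fin (n j)) → 𝕜) : 0 ≤ specNorm T :=
  Real.sSup_nonneg (by rintro r ⟨x, hx, rfl⟩; exact norm_nonneg _)

lemma nucSet_bddBelow (T : (∀ j, Fin (n j)) → 𝕜) :
    BddBelow {r : ℝ | ∃ (m : ℕ) (x : Fin m → ∀ j, Fin (n j) → 𝕜),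
      T = (∑ i, rankOne (x i)) ∧ r = ∑ i, ∏ j, vnorm (x i j)} := by
  refine ⟨0, ?_⟩
  rintro r ⟨m, x, -, rfl⟩
  exact Finset.sum_nonneg fun i _ => Finset.prod_nonneg fun j _ => vnorm_nonneg _

lemma nucNorm_nonneg (T : (∀ j, Fin (n j)) → 𝕜) : 0 ≤ nucNorm T :=
  Real.sInf_nonneg (by
    rintro r ⟨m, x, -, rfl⟩
    exact Finset.sum_nonneg fun i _ => Finset.prod_nonneg fun j _ => vnorm_nonneg _)

lemma nucNorm_zero_le : nucNorm (0 : (∀ j, Fin (n j)) → 𝕜) ≤ 0 :=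
  csInf_le (nucSet_bddBelow _) ⟨0, fun i => i.elim0, by simp, by simp⟩

lemma rankOne_delta (hd : 0 < d) (c : ∀ j, Fin (n j)) (v : 𝕜) :
    rankOne (fun j a => if a = c j then (if j = (⟨0, hd⟩ : Fin d) then v else 1) else 0)
      = fun b => if b = c then v else 0 := by
  funext b; unfold rankOne
  by_cases hb : b = c
  · subst hb
    simp only [if_pos rfl]
    exact Finset.prod_ite_eq' Finset.univ _ (fun _ => v) |>.trans (by simp)
  · have : ∃ j, b j ≠ c j := by
      by_contra h; push_neg at h; exact hb (funext h)
    obtain ⟨j, hj⟩ := this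
    rw [if_neg hb]
    exact Finset.prod_eq_zero (Finset.mem_univ j) (by simp [hj])

set_option maxHeartbeats 1000000 in
lemma sum_norm_mem_nucSet (hd : 0 < d) (T : (∀ j, Fin (n j)) → 𝕜) :
    (∑ b, ‖T b‖) ∈ {r : ℝ | ∃ (m : ℕ) (x : Fin m → ∀ j, Fin (n j) → 𝕜),
      T = (∑ i, rankOne (x i)) ∧ r = ∑ i, ∏ j, vnorm (x i j)} := by
  obtain ⟨m, ⟨e⟩⟩ : ∃ m : ℕ, Nonempty ((Fin m) ≃ (∀ j, Fin (n j))) :=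
    ⟨_, ⟨(Fintype.equivFin _).symm⟩⟩
  refine ⟨m,
    fun i j a => if a = (e i) j then (if j = (⟨0, hd⟩ : Fin d) then T (e i) else 1) else 0,
    ?_, ?_⟩
  · funext b
    rw [Finset.sum_apply]
    have h1 : ∀ i : Fin m, rankOne (fun j a => if a = (e i) j then
        (if j = (⟨0, hd⟩ : Fin d) then T (e i) else 1) else 0) b
        = if b = e i then T (e i) else 0 := fun i => by rw [rankOne_delta hd]
    rw [Finset.sum_congr rfl fun i _ => h1 i]
    rw [show ∑ i, (if b = e i then T (e i) else 0)
        = ∑ c, (if b = c then T c else 0) from Equiv.sum_comp e (fun c => if b = c then T c else 0)]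
    simp
  · refine (Equiv.sum_comp e fun b => ‖T b‖).symm.trans (Finset.sum_congr rfl fun i _ => ?_)
    have hv : ∀ j, vnorm (fun a => if a = (e i) j then
        (if j = (⟨0, hd⟩ : Fin d) then T (e i) else 1) else 0)
        = if j = (⟨0, hd⟩ : Fin d) then ‖T (e i)‖ else 1 := fun j => by
      rw [vnorm_single]; split <;> simp
    rw [Finset.prod_congr rfl fun j _ => hv j,
      Finset.prod_ite_eq' Finset.univ _ (fun _ => ‖T (e i)‖)]
    simp

lemma nucSet_nonempty (hd : 0 < d) (T : (∀ j, Fin (n j)) → 𝕜) :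
    Set.Nonempty {r : ℝ | ∃ (m : ℕ) (x : Fin m → ∀ j, Fin (n j) → 𝕜),
      T = (∑ i, rankOne (x i)) ∧ r = ∑ i, ∏ j, vnorm (x i j)} :=
  ⟨_, sum_norm_mem_nucSet hd T⟩

lemma nucNorm_le_sum_norm (hd : 0 < d) (T : (∀ j, Fin (n j)) → 𝕜) :
    nucNorm T ≤ ∑ b, ‖T b‖ :=
  csInf_le (nucSet_bddBelow _) (sum_norm_mem_nucSet hd T)

lemma update_comp {γ : Fin d → Type*} {M : Type*} (φ : ∀ j, γ j → M) (x : ∀ j, γ j)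
    (j0 : Fin d) (v : γ j0) (j : Fin d) :
    φ j (Function.update x j0 v j) = Function.update (fun j => φ j (x j)) j0 (φ j0 v) j := by
  rcases eq_or_ne j j0 with rfl | h
  · simp
  · simp [h]

lemma prod_comp_update {γ : Fin d → Type*} {M : Type*} [CommMonoid M] (φ : ∀ j, γ j → M)
    (x : ∀ j, γ j) (j0 : Fin d) (v : γ j0) :
    ∏ j, φ j (Function.update x j0 v j) = φ j0 v * ∏ j ∈ Finset.univ.erase j0, φ j (x j) := by
  rw [Finset.prod_congr rfl fun j _ => update_comp φ x j0 v j,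
    ← Finset.mul_prod_erase Finset.univ _ (Finset.mem_univ j0)]
  congr 1
  · simp
  · exact Finset.prod_congr rfl fun j hj => by
      rw [Function.update_of_ne (Finset.ne_of_mem_erase hj)]

lemma nucNorm_add_le (hd : 0 < d) (A B : (∀ j, Fin (n j)) → 𝕜) :
    nucNorm (A + B) ≤ nucNorm A + nucNorm B := by
  have key : ∀ rA ∈ {r : ℝ | ∃ (m : ℕ) (x : Fin m → ∀ j, Fin (n j) → 𝕜),
      A = (∑ i, rankOne (x i)) ∧ r = ∑ i, ∏ j, vnorm (x i j)},
      ∀ rB ∈ {r : ℝ | ∃ (m : ℕ) (x : Fin m → ∀ j, Fin (n j) → 𝕜),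
      B = (∑ i, rankOne (x i)) ∧ r = ∑ i, ∏ j, vnorm (x i j)},
      nucNorm (A + B) ≤ rA + rB := by
    rintro rA ⟨m1, x, hA, rfl⟩ rB ⟨m2, y, hB, rfl⟩
    refine csInf_le (nucSet_bddBelow _) ⟨m1 + m2, Fin.append x y, ?_, ?_⟩
    · rw [hA, hB]
      rw [Fin.sum_univ_add (f := fun i => rankOne (Fin.append x y i))]
      simp
    · rw [Fin.sum_univ_add (f := fun i => ∏ j, vnorm (Fin.append x y i j))]
      simp
  have h1 : ∀ rA ∈ {r : ℝ | ∃ (m : ℕ) (x : Fin m → ∀ j, Fin (n j) → 𝕜),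
      A = (∑ i, rankOne (x i)) ∧ r = ∑ i, ∏ j, vnorm (x i j)},
      nucNorm (A + B) - rA ≤ nucNorm B := fun rA hA =>
    le_csInf (nucSet_nonempty hd B) fun rB hB => by
      have := key rA hA rB hB; linarith
  have h2 : nucNorm (A + B) - nucNorm B ≤ nucNorm A :=
    le_csInf (nucSet_nonempty hd A) fun rA hA => by
      have := h1 rA hA; linarith
  linarith

lemma nucNorm_sum_le (hd : 0 < d) {ι : Type*} (s : Finset ι)
    (A : ι → (∀ j, Fin (n j)) → 𝕜) :
    nucNorm (∑ k ∈ s, A k) ≤ ∑ k ∈ s, nucNorm (A k) := by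
  induction s using Finset.cons_induction with
  | empty => simpa using nucNorm_zero_le
  | cons a s ha ih =>
    rw [Finset.sum_cons, Finset.sum_cons]
    exact (nucNorm_add_le hd _ _).trans (add_le_add_right ih _)

lemma rankOne_update_smul (x : ∀ j, Fin (n j) → 𝕜) (j0 : Fin d) (c : 𝕜) :
    rankOne (Function.update x j0 (c • x j0)) = c • rankOne x := by
  funext b; unfold rankOne
  rw [prod_comp_update (fun j (v : Fin (n j) → 𝕜) => v (b j)) x j0 (c • x j0)]
  rw [Pi.smul_apply, smul_eq_mul, Pi.smul_apply, smul_eq_mul,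
    ← Finset.mul_prod_erase Finset.univ (fun j => x j (b j)) (Finset.mem_univ j0)]
  ring

lemma nucNorm_smul_le (hd : 0 < d) (c : 𝕜) (T : (∀ j, Fin (n j)) → 𝕜) :
    nucNorm (c • T) ≤ ‖c‖ * nucNorm T := by
  have key : ∀ r ∈ {r : ℝ | ∃ (m : ℕ) (x : Fin m → ∀ j, Fin (n j) → 𝕜),
      T = (∑ i, rankOne (x i)) ∧ r = ∑ i, ∏ j, vnorm (x i j)},
      nucNorm (c • T) ≤ ‖c‖ * r := by
    rintro r ⟨m, x, hT, rfl⟩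
    refine csInf_le (nucSet_bddBelow _)
      ⟨m, fun i => Function.update (x i) (⟨0, hd⟩ : Fin d) (c • x i ⟨0, hd⟩), ?_, ?_⟩
    · rw [hT, Finset.smul_sum]
      exact Finset.sum_congr rfl fun i _ => (rankOne_update_smul (x i) _ c).symm
    · rw [Finset.mul_sum]
      refine Finset.sum_congr rfl fun i _ => ?_
      rw [prod_comp_update (fun j (v : Fin (n j) → 𝕜) => vnorm v) (x i) _ _, vnorm_smul,
        ← Finset.mul_prod_erase Finset.univ (fun j => vnorm (x i j)) (Finset.mem_univ ⟨0, hd⟩)]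
      ring
  rcases eq_or_ne c 0 with rfl | hc
  · simpa using nucNorm_zero_le
  · have hcpos : (0:ℝ) < ‖c‖ := norm_pos_iff.mpr hc
    have h : nucNorm (c • T) / ‖c‖ ≤ nucNorm T :=
      le_csInf (nucSet_nonempty hd T) fun r hr =>
        (div_le_iff₀ hcpos).mpr (by rw [mul_comm]; exact key r hr)
    calc nucNorm (c • T) = nucNorm (c • T) / ‖c‖ * ‖c‖ := by field_simp
    _ ≤ nucNorm T * ‖c‖ := by gcongr
    _ = ‖c‖ * nucNorm T := mul_comm _ _

section Snoc

variable {N : Fin (d + 1) → ℕ}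

/-- slice of a `(d+1)`-tensor along the last mode -/
def sliceT (T : (∀ j, Fin (N j)) → 𝕜) (k : Fin (N (Fin.last d))) :
    (∀ j : Fin d, Fin (N j.castSucc)) → 𝕜 :=
  fun i => T (Fin.snoc i k)

/-- extension of a `d`-tensor by a basis vector in the last mode -/
def extT (S : (∀ j : Fin d, Fin (N j.castSucc)) → 𝕜) (k : Fin (N (Fin.last d))) :
    (∀ j, Fin (N j)) → 𝕜 :=
  fun b => S (fun j => b j.castSucc) * euv k (b (Fin.last d))

lemma sum_snoc {M : Type*} [AddCommMonoid M] (f : (∀ j, Fin (N j)) → M) :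
    ∑ b, f b = ∑ k, ∑ i : ∀ j : Fin d, Fin (N j.castSucc), f (Fin.snoc i k) := by
  rw [← Equiv.sum_comp (Fin.snocEquiv (fun j => Fin (N j))) f, Fintype.sum_prod_type]
  simp [Fin.snocEquiv]

lemma rankOne_snoc (x : ∀ j : Fin d, Fin (N j.castSucc) → 𝕜) (u : Fin (N (Fin.last d)) → 𝕜)
    (b : ∀ j, Fin (N j)) :
    rankOne (n := N) (Fin.snoc x u) b = rankOne x (fun j => b j.castSucc) * u (b (Fin.last d)) := by
  unfold rankOne
  rw [Fin.prod_univ_castSucc]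
  congr 1
  exact Finset.prod_congr rfl fun j _ => by rw [Fin.snoc_castSucc]
  rw [Fin.snoc_last]

lemma prod_vnorm_snoc (x : ∀ j : Fin d, Fin (N j.castSucc) → 𝕜) (u : Fin (N (Fin.last d)) → 𝕜) :
    ∏ j, vnorm (Fin.snoc (α := fun j => Fin (N j) → 𝕜) x u j) = (∏ j, vnorm (x j)) * vnorm u := by
  rw [Fin.prod_univ_castSucc]
  congr 1
  exact Finset.prod_congr rfl fun j _ => by rw [Fin.snoc_castSucc]
  rw [Fin.snoc_last]

lemma hsNorm_sq_eq_sum_slices (T : (∀ j, Fin (N j)) → 𝕜) :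
    hsNorm T ^ 2 = ∑ k, hsNorm (sliceT T k) ^ 2 := by
  unfold hsNorm
  rw [Real.sq_sqrt (Finset.sum_nonneg fun b _ => by positivity)]
  rw [sum_snoc (fun b => ‖T b‖ ^ 2)]
  exact Finset.sum_congr rfl fun k _ => by
    rw [Real.sq_sqrt (Finset.sum_nonneg fun i _ => by positivity)]; rfl

lemma tinner_snoc (T : (∀ j, Fin (N j)) → 𝕜) (k : Fin (N (Fin.last d)))
    (x : ∀ j : Fin d, Fin (N j.castSucc) → 𝕜) :
    tinner T (rankOne (n := N) (Fin.snoc x (euv k))) = tinner (sliceT T k) (rankOne x) := by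
  unfold tinner
  rw [sum_snoc (fun b => T b * (starRingEnd 𝕜) (rankOne (n := N) (Fin.snoc x (euv k)) b))]
  have h1 : ∀ (k' : Fin (N (Fin.last d))) (i : ∀ j : Fin d, Fin (N j.castSucc)),
      T (Fin.snoc i k') * (starRingEnd 𝕜) (rankOne (n := N) (Fin.snoc x (euv k)) (Fin.snoc i k'))
      = if k' = k then T (Fin.snoc i k) * (starRingEnd 𝕜) (rankOne x i) else 0 := by
    intro k' i
    rw [rankOne_snoc]
    have h2 : (fun j : Fin d => Fin.snoc (α := fun j => Fin (N j)) i k' j.castSucc) = i := by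
      funext j; rw [Fin.snoc_castSucc]
    have h3 : Fin.snoc (α := fun j => Fin (N j)) i k' (Fin.last d) = k' := Fin.snoc_last _ _
    rw [h2, h3]
    unfold euv
    rcases eq_or_ne k' k with rfl | hk
    · simp
    · simp [hk]
  rw [Finset.sum_congr rfl fun k' _ => Finset.sum_congr rfl fun i _ => h1 k' i]
  have h4 : ∀ k' : Fin (N (Fin.last d)),
      (∑ i : ∀ j : Fin d, Fin (N j.castSucc),
        if k' = k then T (Fin.snoc i k) * (starRingEnd 𝕜) (rankOne x i) else 0)
      = if k' = k then
          ∑ i : ∀ j : Fin d, Fin (N j.castSucc), T (Fin.snoc i k) * (starRingEnd 𝕜) (rankOne x i)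
        else 0 := fun k' => by split_ifs <;> simp
  rw [Finset.sum_congr rfl fun k' _ => h4 k',
    Finset.sum_ite_eq' Finset.univ k]
  simp only [Finset.mem_univ, if_true]
  rfl

lemma eq_sum_extT (T : (∀ j, Fin (N j)) → 𝕜) :
    T = ∑ k, extT (sliceT T k) k := by
  funext b
  rw [Finset.sum_apply]
  have h1 : ∀ k, extT (sliceT T k) k b
      = if b (Fin.last d) = k then T (Fin.snoc (fun j => b j.castSucc) k) else 0 := by
    intro k
    unfold extT euv sliceT
    split <;> simp
  rw [Finset.sum_congr rfl fun k _ => h1 k, Finset.sum_ite_eq Finset.univ (b (Fin.last d))]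
  have : Fin.snoc (α := fun j => Fin (N j)) (fun j => b j.castSucc) (b (Fin.last d)) = b :=
    Fin.snoc_init_self b
  simp [this]

lemma nucSet_subset_extT (S : (∀ j : Fin d, Fin (N j.castSucc)) → 𝕜) (k : Fin (N (Fin.last d)))
    {r : ℝ} (hr : r ∈ {r : ℝ | ∃ (m : ℕ) (x : Fin m → ∀ j : Fin d, Fin (N j.castSucc) → 𝕜),
      S = (∑ i, rankOne (x i)) ∧ r = ∑ i, ∏ j, vnorm (x i j)}) :
    r ∈ {r : ℝ | ∃ (m : ℕ) (x : Fin m → ∀ j : Fin (d+1), Fin (N j) → 𝕜),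
      extT S k = (∑ i, rankOne (x i)) ∧ r = ∑ i, ∏ j, vnorm (x i j)} := by
  obtain ⟨m, x, hS, rfl⟩ := hr
  refine ⟨m, fun i => Fin.snoc (x i) (euv k), ?_, ?_⟩
  · funext b
    rw [Finset.sum_apply]
    have h1 : ∀ i, rankOne (n := N) (Fin.snoc (x i) (euv k)) b
        = rankOne (x i) (fun j => b j.castSucc) * euv k (b (Fin.last d)) :=
      fun i => rankOne_snoc _ _ _
    rw [Finset.sum_congr rfl fun i _ => h1 i, ← Finset.sum_mul]
    unfold extT
    rw [hS, Finset.sum_apply]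
  · refine Finset.sum_congr rfl fun i _ => ?_
    rw [prod_vnorm_snoc, vnorm_euv, mul_one]

lemma nucNorm_extT_le (hd : 0 < d) (S : (∀ j : Fin d, Fin (N j.castSucc)) → 𝕜)
    (k : Fin (N (Fin.last d))) :
    nucNorm (extT S k) ≤ nucNorm S :=
  csInf_le_csInf (nucSet_bddBelow _) (nucSet_nonempty hd S)
    (fun r hr => nucSet_subset_extT S k hr)

end Snoc

end Helpers

section Main

variable {𝕜 : Type*} [RCLike 𝕜] {d : ℕ} {n : Fin d → ℕ}

lemma exists_unit_tensor (hn : ∀ j, 1 ≤ n j) :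
    ∃ T : (∀ j, Fin (n j)) → 𝕜, hsNorm T = 1 :=
  ⟨rankOne (fun j => euv ⟨0, hn j⟩), by
    rw [hsNorm_rankOne]
    exact Finset.prod_eq_one fun j _ => vnorm_euv _⟩

lemma alphaSet_bddAbove (hd : 0 < d) :
    BddAbove {r : ℝ | ∃ T : (∀ j, Fin (n j)) → 𝕜, hsNorm T = 1 ∧ r = nucNorm T} := by
  refine ⟨Real.sqrt (Fintype.card (∀ j, Fin (n j))), ?_⟩
  rintro r ⟨T, hT, rfl⟩
  calc nucNorm T ≤ ∑ b, ‖T b‖ := nucNorm_le_sum_norm hd T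
  _ = ∑ b, 1 * ‖T b‖ := by simp
  _ ≤ Real.sqrt (∑ _b : ∀ j, Fin (n j), (1:ℝ) ^ 2) * Real.sqrt (∑ b, ‖T b‖ ^ 2) :=
      Real.sum_mul_le_sqrt_mul_sqrt _ _ _
  _ = Real.sqrt (Fintype.card (∀ j, Fin (n j))) * hsNorm T := by
      rw [show hsNorm T = Real.sqrt (∑ b, ‖T b‖ ^ 2) from rfl]
      congr 2
      simp [Finset.card_univ]
  _ = _ := by rw [hT, mul_one]

lemma betaSet_bddBelow :
    BddBelow {r : ℝ | ∃ T : (∀ j, Fin (n j)) → 𝕜, hsNorm T = 1 ∧ r = specNorm T} :=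
  ⟨0, by rintro r ⟨T, hT, rfl⟩; exact specNorm_nonneg T⟩

lemma alphaN_nonneg : 0 ≤ alphaN 𝕜 d n :=
  Real.sSup_nonneg (by rintro r ⟨T, hT, rfl⟩; exact nucNorm_nonneg T)

lemma betaN_nonneg : 0 ≤ betaN 𝕜 d n :=
  Real.sInf_nonneg (by rintro r ⟨T, hT, rfl⟩; exact specNorm_nonneg T)

lemma nucNorm_le_alpha_mul (hd : 0 < d) (S : (∀ j, Fin (n j)) → 𝕜) :
    nucNorm S ≤ alphaN 𝕜 d n * hsNorm S := by
  by_cases hS : hsNorm S = 0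
  · rw [hS, mul_zero]
    rw [hsNorm_eq_zero hS]
    exact nucNorm_zero_le
  · have hc : (0:ℝ) < hsNorm S := lt_of_le_of_ne (hsNorm_nonneg S) (Ne.symm hS)
    set c : ℝ := hsNorm S with hcdef
    have hck : ((c : 𝕜)) ≠ 0 := by
      simp only [ne_eq, RCLike.ofReal_eq_zero]
      exact ne_of_gt hc
    set U : (∀ j, Fin (n j)) → 𝕜 := ((c : 𝕜))⁻¹ • S with hU
    have hU1 : hsNorm U = 1 := by
      rw [hU, hsNorm_smul, norm_inv, RCLike.norm_ofReal, abs_of_pos hc, ← hcdef,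
        inv_mul_cancel₀ (ne_of_gt hc)]
    have hSU : S = (c : 𝕜) • U := by
      rw [hU, smul_inv_smul₀ hck]
    have h1 : nucNorm U ≤ alphaN 𝕜 d n :=
      le_csSup (alphaSet_bddAbove hd) ⟨U, hU1, rfl⟩
    calc nucNorm S = nucNorm ((c : 𝕜) • U) := by rw [← hSU]
    _ ≤ ‖((c : 𝕜))‖ * nucNorm U := nucNorm_smul_le hd _ _
    _ = c * nucNorm U := by rw [RCLike.norm_ofReal, abs_of_pos hc]
    _ ≤ c * alphaN 𝕜 d n := by gcongr
    _ = alphaN 𝕜 d n * c := mul_comm _ _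

end Main


/-- `β((n₁,…,n_{d+1}),𝕜) ≥ β((n₁,…,n_d),𝕜)/√(n_{d+1})` and
`α((n₁,…,n_{d+1}),𝕜) ≤ √(n_{d+1})·α((n₁,…,n_d),𝕜)`. -/
theorem stmt14 (𝕜 : Type*) [RCLike 𝕜] (d : ℕ) (hd : 1 ≤ d) (n : Fin (d + 1) → ℕ)
    (hn : ∀ j, 1 ≤ n j) :
    betaN 𝕜 (d + 1) n ≥
      betaN 𝕜 d (n ∘ Fin.castSucc) / Real.sqrt (n (Fin.last d)) ∧
    alphaN 𝕜 (d + 1) n ≤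
      Real.sqrt (n (Fin.last d)) * alphaN 𝕜 d (n ∘ Fin.castSucc) := by
  have hd0 : 0 < d := hd
  have hn' : ∀ j : Fin d, 1 ≤ (n ∘ Fin.castSucc) j := fun j => hn _
  have hνpos : (0:ℝ) < (n (Fin.last d) : ℝ) := by exact_mod_cast hn (Fin.last d)
  have hsqν : (0:ℝ) < Real.sqrt (n (Fin.last d)) := Real.sqrt_pos.mpr hνpos
  constructor
  · rw [ge_iff_le, betaN]
    refine le_csInf ?_ ?_
    · obtain ⟨T0, hT0⟩ := exists_unit_tensor (𝕜 := 𝕜) hn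
      exact ⟨specNorm T0, T0, hT0, rfl⟩
    rintro r ⟨T, hT, rfl⟩
    obtain ⟨k0, -, hk0⟩ := Finset.exists_max_image Finset.univ
      (fun k => hsNorm (sliceT T k) ^ 2) ⟨⟨0, hn _⟩, Finset.mem_univ _⟩
    have hsum : ∑ k, hsNorm (sliceT T k) ^ 2 = 1 := by
      rw [← hsNorm_sq_eq_sum_slices, hT, one_pow]
    have hcard : (1:ℝ) ≤ (n (Fin.last d) : ℝ) * (hsNorm (sliceT T k0) ^ 2) := by
      calc (1:ℝ) = ∑ k, hsNorm (sliceT T k) ^ 2 := hsum.symm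
      _ ≤ Finset.univ.card • (hsNorm (sliceT T k0) ^ 2) :=
          Finset.sum_le_card_nsmul _ _ _ (fun k _ => hk0 k (Finset.mem_univ k))
      _ = _ := by simp [Finset.card_univ, nsmul_eq_mul]
    set c : ℝ := hsNorm (sliceT T k0) with hcdef
    have hcnn : 0 ≤ c := hsNorm_nonneg _
    have hs0 : 0 < c := by
      rcases hcnn.lt_or_eq with h | h
      · exact h
      · exfalso; rw [← h] at hcard; simp at hcard; linarith
    have hcsq : (↑(n (Fin.last d)) : ℝ)⁻¹ ≤ c ^ 2 := by
      rw [inv_le_iff_one_le_mul₀ hνpos]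
      linarith
    have hcge : (Real.sqrt (n (Fin.last d)))⁻¹ ≤ c := by
      calc (Real.sqrt (n (Fin.last d)))⁻¹ = Real.sqrt ((↑(n (Fin.last d)) : ℝ)⁻¹) :=
          (Real.sqrt_inv _).symm
      _ ≤ Real.sqrt (c ^ 2) := Real.sqrt_le_sqrt hcsq
      _ = c := Real.sqrt_sq hcnn
    set U : (∀ j : Fin d, Fin ((n ∘ Fin.castSucc) j)) → 𝕜 :=
      ((c : 𝕜))⁻¹ • (sliceT T k0) with hUdef
    have hU1 : hsNorm U = 1 := by
      rw [hUdef, hsNorm_smul, norm_inv, RCLike.norm_ofReal, abs_of_pos hs0, ← hcdef,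
        inv_mul_cancel₀ (ne_of_gt hs0)]
    have hbeta : betaN 𝕜 d (n ∘ Fin.castSucc) ≤ specNorm U :=
      csInf_le betaSet_bddBelow ⟨U, hU1, rfl⟩
    have hspecU : specNorm U ≤ specNorm T / c := by
      refine csSup_le (specSet_nonempty hn' U) ?_
      rintro r ⟨x, hx, rfl⟩
      have h1 : tinner U (rankOne x) = ((c : 𝕜))⁻¹ * tinner (sliceT T k0) (rankOne x) := by
        unfold tinner
        rw [Finset.mul_sum]
        refine Finset.sum_congr rfl fun i _ => ?_
        rw [hUdef, Pi.smul_apply, smul_eq_mul]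
        ring
      have h2 : tinner (sliceT T k0) (rankOne x) = tinner T (rankOne (Fin.snoc x (euv k0))) :=
        (tinner_snoc T k0 x).symm
      have h3 : ‖tinner T (rankOne (n := n) (Fin.snoc x (euv k0)))‖ ≤ specNorm T := by
        refine norm_tinner_le_specNorm T _ ?_
        intro j
        refine Fin.lastCases ?_ ?_ j
        · rw [Fin.snoc_last]; exact vnorm_euv _
        · intro j'; rw [Fin.snoc_castSucc]; exact hx j'
      rw [h1, h2, norm_mul, norm_inv, RCLike.norm_ofReal, abs_of_pos hs0, div_eq_inv_mul]
      gcongr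
    have h6 : betaN 𝕜 d (n ∘ Fin.castSucc) ≤ specNorm T / c := hbeta.trans hspecU
    have h7 : c⁻¹ ≤ Real.sqrt (n (Fin.last d)) := (inv_le_comm₀ hs0 hsqν).mpr hcge
    calc betaN 𝕜 d (n ∘ Fin.castSucc) / Real.sqrt (n (Fin.last d))
        = betaN 𝕜 d (n ∘ Fin.castSucc) * (Real.sqrt (n (Fin.last d)))⁻¹ := div_eq_mul_inv _ _
    _ ≤ betaN 𝕜 d (n ∘ Fin.castSucc) * c :=
        mul_le_mul_of_nonneg_left hcge betaN_nonneg
    _ ≤ specNorm T := (le_div_iff₀ hs0).mp h6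
  · refine csSup_le ?_ ?_
    · obtain ⟨T0, hT0⟩ := exists_unit_tensor (𝕜 := 𝕜) hn
      exact ⟨nucNorm T0, T0, hT0, rfl⟩
    rintro r ⟨T, hT, rfl⟩
    have hsum : ∑ k, hsNorm (sliceT T k) ^ 2 = 1 := by
      rw [← hsNorm_sq_eq_sum_slices, hT, one_pow]
    have hCS : ∑ k, hsNorm (sliceT T k) ≤ Real.sqrt (n (Fin.last d)) := by
      calc ∑ k, hsNorm (sliceT T k) = ∑ k, 1 * hsNorm (sliceT T k) := by simp
      _ ≤ Real.sqrt (∑ _k : Fin (n (Fin.last d)), (1:ℝ) ^ 2)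
          * Real.sqrt (∑ k, hsNorm (sliceT T k) ^ 2) :=
          Real.sum_mul_le_sqrt_mul_sqrt _ _ _
      _ = Real.sqrt (n (Fin.last d)) := by
          rw [hsum, Real.sqrt_one, mul_one]
          congr 1
          simp [Finset.card_univ]
    calc nucNorm T = nucNorm (∑ k, extT (sliceT T k) k) := by rw [← eq_sum_extT T]
    _ ≤ ∑ k, nucNorm (extT (sliceT T k) k) := nucNorm_sum_le (Nat.succ_pos d) _ _
    _ ≤ ∑ k, nucNorm (sliceT T k) :=
        Finset.sum_le_sum fun k _ => nucNorm_extT_le hd0 _ k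
    _ ≤ ∑ k, alphaN 𝕜 d (n ∘ Fin.castSucc) * hsNorm (sliceT T k) :=
        Finset.sum_le_sum fun k _ => nucNorm_le_alpha_mul hd0 _
    _ = alphaN 𝕜 d (n ∘ Fin.castSucc) * ∑ k, hsNorm (sliceT T k) := by
        rw [Finset.mul_sum]
    _ ≤ alphaN 𝕜 d (n ∘ Fin.castSucc) * Real.sqrt (n (Fin.last d)) :=
        mul_le_mul_of_nonneg_left hCS alphaN_nonneg
    _ = Real.sqrt (n (Fin.last d)) * alphaN 𝕜 d (n ∘ Fin.castSucc) := mul_comm _ _
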